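/- For every standard Young tableau T of shape λ ⊢ n, the descent set of T equals the complemented descent set of its evacuation: Dsi(T) = {n - i : i ∈ Dsi(ev T)}, and consequently Asi(T) = {n - i : i ∈ Asi(ev T)}. -/

import Mathlib

/-- `pos : Fin n → ℕ × ℕ` represents a standard Young tableau of size `n`, where
`pos i` is the (row, column) of the box containing the entry `i+1`.  The conditions say
that the filling is injective and that the boxes directly above and directly to the left
of any box exist and carry smaller entries (so the occupied boxes form a Young diagram and
the entries increase along rows and columns). -/
def IsSYT (n : ℕ) (pos : Fin n → ℕ × ℕ) : Prop :=
  Function.Injective pos ∧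
    ∀ (i : Fin n) (r c : ℕ),
      (pos i = (r + 1, c) → ∃ i' : Fin n, i' < i ∧ pos i' = (r, c)) ∧
      (pos i = (r, c + 1) → ∃ i' : Fin n, i' < i ∧ pos i' = (r, c))

/-- The descent set: `i ∈ Dsi(T)` iff `1 ≤ i < n` and the entry `i+1` lies in a strictly
lower row than the entry `i`. -/
def Dsi (n : ℕ) (pos : Fin n → ℕ × ℕ) : Set ℕ :=
  {i | ∃ (_ : 1 ≤ i) (h2 : i < n), (pos ⟨i - 1, by omega⟩).1 < (pos ⟨i, h2⟩).1}

/-- The ascent set: the complement of the descent set inside `{1,…,n-1}`. -/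
def Asi (n : ℕ) (pos : Fin n → ℕ × ℕ) : Set ℕ :=
  {i | 1 ≤ i ∧ i < n ∧ i ∉ Dsi n pos}

open Classical in
/-- The elementary (Bender–Knuth type) involution `τ_i` on standard Young tableaux:
it interchanges the entries `i` and `i+1` whenever the result is again standard
(i.e. whenever `i` and `i+1` are not in the same row or column), and fixes the
tableau otherwise. -/
noncomputable def tauSYT (n i : ℕ) (pos : Fin n → ℕ × ℕ) : Fin n → ℕ × ℕ :=
  if h : 1 ≤ i ∧ i < n then
    let pos' := pos ∘ (Equiv.swap (⟨i - 1, by omega⟩ : Fin n) (⟨i, h.2⟩ : Fin n))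
    if IsSYT n pos' then pos' else pos
  else pos

/-- The Schützenberger evacuation involution, via its standard factorization
`ev = (τ₁τ₂⋯τ_{n-1})(τ₁⋯τ_{n-2})⋯(τ₁τ₂)(τ₁)` into elementary involutions,
applied from left to right (Stanley, "Promotion and evacuation"). -/
noncomputable def evacSYT (n : ℕ) (pos : Fin n → ℕ × ℕ) : Fin n → ℕ × ℕ :=
  (List.range (n - 1)).foldl
    (fun S j => (List.range (n - 1 - j)).foldl (fun S' m => tauSYT n (m + 1) S') S) pos

namespace SytAux
variable {n : ℕ} {pos : Fin n → ℕ × ℕ}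

lemma chainUp (h : IsSYT n pos) (j : Fin n) (d r c : ℕ) (hj : pos j = (r + d, c)) :
    ∃ j' : Fin n, j' ≤ j ∧ pos j' = (r, c) := by
  induction d generalizing j with
  | zero => exact ⟨j, le_refl _, hj⟩
  | succ d ih =>
    obtain ⟨j'', hlt, hj''⟩ := ((h.2 j (r + d) c).1 (by rw [hj]; ring_nf))
    obtain ⟨j', hle, hj'⟩ := ih j'' hj''
    exact ⟨j', le_trans hle (le_of_lt hlt), hj'⟩

lemma chainLeft (h : IsSYT n pos) (j : Fin n) (d r c : ℕ) (hj : pos j = (r, c + d)) :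
    ∃ j' : Fin n, j' ≤ j ∧ pos j' = (r, c) := by
  induction d generalizing j with
  | zero => exact ⟨j, le_refl _, hj⟩
  | succ d ih =>
    obtain ⟨j'', hlt, hj''⟩ := ((h.2 j r (c + d)).2 (by rw [hj]; ring_nf))
    obtain ⟨j', hle, hj'⟩ := ih j'' hj''
    exact ⟨j', le_trans hle (le_of_lt hlt), hj'⟩

/-- NW monotonicity: a box weakly northwest of another carries a smaller index. -/
lemma nw_le (h : IsSYT n pos) {j j' : Fin n} {r c r' c' : ℕ}
    (hj : pos j = (r, c)) (hj' : pos j' = (r', c')) (hr : r' ≤ r) (hc : c' ≤ c) :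
    j' ≤ j := by
  obtain ⟨j₁, hle1, hj1⟩ := chainUp h j (r - r') r' c (by rw [hj]; congr 1; omega)
  obtain ⟨j₂, hle2, hj2⟩ := chainLeft h j₁ (c - c') r' c' (by rw [hj1]; congr 1; omega)
  have : j₂ = j' := h.1 (by rw [hj2, hj'])
  omega

lemma nw_lt (h : IsSYT n pos) {j j' : Fin n} {r c r' c' : ℕ}
    (hj : pos j = (r, c)) (hj' : pos j' = (r', c')) (hr : r' ≤ r) (hc : c' ≤ c)
    (hne : (r', c') ≠ (r, c)) : j' < j := by
  have hle := nw_le h hj hj' hr hc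
  have : j' ≠ j := by rintro rfl; rw [hj] at hj'; exact hne hj'.symm
  omega

/-- Transpose of a SYT is a SYT. -/
lemma transpose (h : IsSYT n pos) : IsSYT n (fun j => ((pos j).2, (pos j).1)) := by
  constructor
  · intro a b hab
    apply h.1
    have h1 : (pos a).2 = (pos b).2 := congrArg Prod.fst hab
    have h2 : (pos a).1 = (pos b).1 := congrArg Prod.snd hab
    exact Prod.ext h2 h1
  · intro i r c
    constructor
    · intro hi
      have : pos i = (c, r + 1) := by
        have h1 : (pos i).2 = r + 1 := congrArg Prod.fst hi
        have h2 : (pos i).1 = c := congrArg Prod.snd hi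
        exact Prod.ext h2 h1
      obtain ⟨i', hlt, hi'⟩ := (h.2 i c r).2 this
      exact ⟨i', hlt, by simp only []; rw [hi']⟩
    · intro hi
      have : pos i = (c + 1, r) := by
        have h1 : (pos i).2 = r := congrArg Prod.fst hi
        have h2 : (pos i).1 = c + 1 := congrArg Prod.snd hi
        exact Prod.ext h2 h1
      obtain ⟨i', hlt, hi'⟩ := (h.2 i c r).1 this
      exact ⟨i', hlt, by simp only []; rw [hi']⟩

/-- If entries at A < B lie in the same row then col A < col B; etc. -/
lemma swap_syt_iff (h : IsSYT n pos) {i : ℕ} (h1 : 1 ≤ i) (h2 : i < n) :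
    IsSYT n (pos ∘ (Equiv.swap (⟨i - 1, by omega⟩ : Fin n) (⟨i, h2⟩ : Fin n))) ↔
      ((pos ⟨i - 1, by omega⟩).1 ≠ (pos ⟨i, h2⟩).1 ∧
       (pos ⟨i - 1, by omega⟩).2 ≠ (pos ⟨i, h2⟩).2) := by
  set A : Fin n := ⟨i - 1, by omega⟩ with hA
  set B : Fin n := ⟨i, h2⟩ with hB
  have hAB : A < B := by simp [hA, hB, Fin.lt_def]; omega
  have hABne : A ≠ B := ne_of_lt hAB
  set σ := Equiv.swap A B with hσ
  have hσA : σ A = B := Equiv.swap_apply_left A B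
  have hσB : σ B = A := Equiv.swap_apply_right A B
  have hσo : ∀ m : Fin n, m ≠ A → m ≠ B → σ m = m := fun m h1 h2 =>
    Equiv.swap_apply_of_ne_of_ne h1 h2
  constructor
  · intro h'
    constructor
    · intro hrow
      -- same row: in pos, col A < col B by nw; in pos∘σ, reversed: contradiction
      have hca : (pos B).2 ≤ (pos A).2 ∨ (pos A).2 ≤ (pos B).2 := le_total _ _
      rcases hca with hc | hc
      · have := nw_le h (Prod.mk.eta (p := pos A) ▸ rfl : pos A = ((pos A).1, (pos A).2))
          (Prod.mk.eta (p := pos B) ▸ rfl : pos B = ((pos B).1, (pos B).2))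
          (le_of_eq hrow.symm) hc
        exact absurd this (not_le_of_gt hAB)
      · have := nw_le h' (show (pos ∘ σ) A = ((pos B).1, (pos B).2) by simp [hσA])
          (show (pos ∘ σ) B = ((pos A).1, (pos A).2) by simp [hσB])
          (le_of_eq hrow) hc
        exact absurd this (not_le_of_gt hAB)
    · intro hcol
      have hca : (pos B).1 ≤ (pos A).1 ∨ (pos A).1 ≤ (pos B).1 := le_total _ _
      rcases hca with hc | hc
      · have := nw_le h (rfl : pos A = pos A) (rfl : pos B = pos B) hc (le_of_eq hcol.symm)
        exact absurd this (not_le_of_gt hAB)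
      · have := nw_le h' (show (pos ∘ σ) A = pos B by simp [hσA])
          (show (pos ∘ σ) B = pos A by simp [hσB]) hc (le_of_eq hcol)
        exact absurd this (not_le_of_gt hAB)
  · rintro ⟨hrow, hcol⟩
    constructor
    · exact h.1.comp (Equiv.injective σ)
    · intro m r c
      constructor
      · intro hm
        by_cases hmA : m = A
        · subst hmA
          have hm' : pos B = (r + 1, c) := by simpa [hσA] using hm
          obtain ⟨m'', hlt, hm''⟩ := (h.2 B r c).1 hm'
          have hne1 : m'' ≠ A := by
            rintro rfl
            apply hcol
            rw [hm'', hm']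
          have hlt' : m'' < A := by
            have : m''.val < i := hlt
            have : m''.val ≠ i - 1 := fun hh => hne1 (Fin.ext hh)
            simp only [hA, Fin.lt_def]; omega
          refine ⟨m'', hlt', ?_⟩
          have hne2 : m'' ≠ B := ne_of_lt hlt
          simp [hσo m'' hne1 hne2, hm'']
        · by_cases hmB : m = B
          · subst hmB
            have hm' : pos A = (r + 1, c) := by simpa [hσB] using hm
            obtain ⟨m'', hlt, hm''⟩ := (h.2 A r c).1 hm'
            have hne1 : m'' ≠ A := ne_of_lt hlt
            have hne2 : m'' ≠ B := ne_of_lt (lt_trans hlt hAB)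
            refine ⟨m'', lt_trans hlt hAB, ?_⟩
            simp [hσo m'' hne1 hne2, hm'']
          · have hm' : pos m = (r + 1, c) := by simpa [hσo m hmA hmB] using hm
            obtain ⟨m'', hlt, hm''⟩ := (h.2 m r c).1 hm'
            by_cases he1 : m'' = A
            · subst he1
              have hBm : B < m := by
                have h1 : A.val < m.val := hlt
                have h2 : m.val ≠ i := fun hh => hmB (Fin.ext hh)
                simp only [hA, hB, Fin.lt_def] at *; omega
              exact ⟨B, hBm, by simp [hσB, hm'']⟩
            · by_cases he2 : m'' = B
              · subst he2
                exact ⟨A, lt_trans hAB hlt, by simp [hσA, hm'']⟩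
              · exact ⟨m'', hlt, by simp [hσo m'' he1 he2, hm'']⟩
      · intro hm
        by_cases hmA : m = A
        · subst hmA
          have hm' : pos B = (r, c + 1) := by simpa [hσA] using hm
          obtain ⟨m'', hlt, hm''⟩ := (h.2 B r c).2 hm'
          have hne1 : m'' ≠ A := by
            rintro rfl
            apply hrow
            rw [hm'', hm']
          have hlt' : m'' < A := by
            have : m''.val < i := hlt
            have : m''.val ≠ i - 1 := fun hh => hne1 (Fin.ext hh)
            simp only [hA, Fin.lt_def]; omega
          refine ⟨m'', hlt', ?_⟩
          have hne2 : m'' ≠ B := ne_of_lt hlt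
          simp [hσo m'' hne1 hne2, hm'']
        · by_cases hmB : m = B
          · subst hmB
            have hm' : pos A = (r, c + 1) := by simpa [hσB] using hm
            obtain ⟨m'', hlt, hm''⟩ := (h.2 A r c).2 hm'
            have hne1 : m'' ≠ A := ne_of_lt hlt
            have hne2 : m'' ≠ B := ne_of_lt (lt_trans hlt hAB)
            refine ⟨m'', lt_trans hlt hAB, ?_⟩
            simp [hσo m'' hne1 hne2, hm'']
          · have hm' : pos m = (r, c + 1) := by simpa [hσo m hmA hmB] using hm
            obtain ⟨m'', hlt, hm''⟩ := (h.2 m r c).2 hm'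
            by_cases he1 : m'' = A
            · subst he1
              have hBm : B < m := by
                have h1 : A.val < m.val := hlt
                have h2 : m.val ≠ i := fun hh => hmB (Fin.ext hh)
                simp only [hA, hB, Fin.lt_def] at *; omega
              exact ⟨B, hBm, by simp [hσB, hm'']⟩
            · by_cases he2 : m'' = B
              · subst he2
                exact ⟨A, lt_trans hAB hlt, by simp [hσA, hm'']⟩
              · exact ⟨m'', hlt, by simp [hσo m'' he1 he2, hm'']⟩

/-- Abbreviation for the two swapped indices. -/
def idxA (n i : ℕ) (h1 : 1 ≤ i) (h2 : i < n) : Fin n := ⟨i - 1, by omega⟩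
def idxB (n i : ℕ) (h2 : i < n) : Fin n := ⟨i, h2⟩

lemma tau_swap (h : IsSYT n pos) {i : ℕ} (h1 : 1 ≤ i) (h2 : i < n)
    (hacc : (pos (idxA n i h1 h2)).1 ≠ (pos (idxB n i h2)).1 ∧
            (pos (idxA n i h1 h2)).2 ≠ (pos (idxB n i h2)).2) :
    tauSYT n i pos = pos ∘ (Equiv.swap (idxA n i h1 h2) (idxB n i h2)) := by
  rw [tauSYT, dif_pos ⟨h1, h2⟩]
  simp only []
  rw [if_pos ((swap_syt_iff h h1 h2).2 hacc)]
  rfl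

lemma tau_fix (h : IsSYT n pos) {i : ℕ} (h1 : 1 ≤ i) (h2 : i < n)
    (hacc : ¬((pos (idxA n i h1 h2)).1 ≠ (pos (idxB n i h2)).1 ∧
            (pos (idxA n i h1 h2)).2 ≠ (pos (idxB n i h2)).2)) :
    tauSYT n i pos = pos := by
  rw [tauSYT, dif_pos ⟨h1, h2⟩]
  simp only []
  rw [if_neg (fun hh => hacc ((swap_syt_iff h h1 h2).1 hh))]

lemma tau_out {i : ℕ} (hi : ¬(1 ≤ i ∧ i < n)) : tauSYT n i pos = pos := by
  rw [tauSYT, dif_neg hi]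

lemma tau_preserves (h : IsSYT n pos) (i : ℕ) : IsSYT n (tauSYT n i pos) := by
  rw [tauSYT]
  split
  · simp only []
    split
    · assumption
    · exact h
  · exact h

/-- τ_i doesn't move entries other than `i-1`, `i`. -/
lemma tau_apply_ne {i : ℕ} (m : Fin n) (hm1 : m.val ≠ i - 1) (hm2 : m.val ≠ i) :
    tauSYT n i pos m = pos m := by
  rw [tauSYT]
  split
  · rename_i h
    simp only []
    split
    · simp only [Function.comp_apply]
      rw [Equiv.swap_apply_of_ne_of_ne]
      · exact fun hh => hm1 (by rw [hh])
      · exact fun hh => hm2 (by rw [hh])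
    · rfl
  · rfl

/-- τ is an involution on SYTs. -/
lemma tau_tau (h : IsSYT n pos) (i : ℕ) : tauSYT n i (tauSYT n i pos) = pos := by
  by_cases hi : 1 ≤ i ∧ i < n
  · obtain ⟨h1, h2⟩ := hi
    set A := idxA n i h1 h2
    set B := idxB n i h2
    by_cases hacc : (pos A).1 ≠ (pos B).1 ∧ (pos A).2 ≠ (pos B).2
    · have ht := tau_swap h h1 h2 hacc
      rw [ht]
      set pos' := pos ∘ (Equiv.swap A B) with hp'
      have h' : IsSYT n pos' := (swap_syt_iff h h1 h2).2 hacc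
      have hacc' : (pos' A).1 ≠ (pos' B).1 ∧ (pos' A).2 ≠ (pos' B).2 := by
        simp only [hp', Function.comp_apply, Equiv.swap_apply_left, Equiv.swap_apply_right]
        exact ⟨hacc.1.symm, hacc.2.symm⟩
      rw [tau_swap h' h1 h2 hacc']
      funext m
      simp [hp', Equiv.swap_apply_self]
      exact congrArg pos (Equiv.swap_apply_self A B m)
    · rw [tau_fix h h1 h2 hacc, tau_fix h h1 h2 hacc]
  · rw [tau_out hi, tau_out hi]

/-- Far commutation. -/
lemma tau_comm (h : IsSYT n pos) {i j : ℕ} (hij : i + 2 ≤ j) :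
    tauSYT n i (tauSYT n j pos) = tauSYT n j (tauSYT n i pos) := by
  by_cases hi : 1 ≤ i ∧ i < n
  swap
  · rw [tau_out hi, tau_out hi]
  by_cases hj : 1 ≤ j ∧ j < n
  swap
  · rw [tau_out hj, tau_out hj]
  obtain ⟨hi1, hi2⟩ := hi
  obtain ⟨hj1, hj2⟩ := hj
  set Ai := idxA n i hi1 hi2 with hAi
  set Bi := idxB n i hi2 with hBi
  set Aj := idxA n j hj1 hj2 with hAj
  set Bj := idxB n j hj2 with hBj
  have hd1 : Ai ≠ Aj := by simp [hAi, hAj, idxA, idxB, Fin.ext_iff]; omega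
  have hd2 : Ai ≠ Bj := by simp [hAi, hBj, idxA, idxB, Fin.ext_iff]; omega
  have hd3 : Bi ≠ Aj := by simp [hBi, hAj, idxA, idxB, Fin.ext_iff]; omega
  have hd4 : Bi ≠ Bj := by simp [hBi, hBj, idxA, idxB, Fin.ext_iff]; omega
  have hσc : ∀ m, Equiv.swap Ai Bi (Equiv.swap Aj Bj m) =
      Equiv.swap Aj Bj (Equiv.swap Ai Bi m) := by
    intro m
    rcases Equiv.swap_apply_def Ai Bi m with _
    by_cases h1 : m = Ai
    · subst h1
      rw [Equiv.swap_apply_of_ne_of_ne hd1 hd2, Equiv.swap_apply_left,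
        Equiv.swap_apply_of_ne_of_ne hd3 hd4]
    by_cases h2 : m = Bi
    · subst h2
      rw [Equiv.swap_apply_of_ne_of_ne hd3 hd4, Equiv.swap_apply_right,
        Equiv.swap_apply_of_ne_of_ne hd1 hd2]
    by_cases h3 : m = Aj
    · subst h3
      rw [Equiv.swap_apply_left, Equiv.swap_apply_of_ne_of_ne (Ne.symm hd2) (Ne.symm hd4),
        Equiv.swap_apply_of_ne_of_ne (Ne.symm hd1) (Ne.symm hd3), Equiv.swap_apply_left]
    by_cases h4 : m = Bj
    · subst h4
      rw [Equiv.swap_apply_right, Equiv.swap_apply_of_ne_of_ne (Ne.symm hd1) (Ne.symm hd3),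
        Equiv.swap_apply_of_ne_of_ne (Ne.symm hd2) (Ne.symm hd4), Equiv.swap_apply_right]
    rw [Equiv.swap_apply_of_ne_of_ne h3 h4, Equiv.swap_apply_of_ne_of_ne h1 h2,
      Equiv.swap_apply_of_ne_of_ne h3 h4]
  -- values of entries i-1, i unchanged by τ_j and vice versa
  have hvi : ∀ S : Fin n → ℕ × ℕ,
      tauSYT n j S (idxA n i hi1 hi2) = S (idxA n i hi1 hi2) := fun S =>
    tau_apply_ne _ (by simp [idxA]; omega) (by simp [idxA]; omega)
  have hvi' : ∀ S : Fin n → ℕ × ℕ,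
      tauSYT n j S (idxB n i hi2) = S (idxB n i hi2) := fun S =>
    tau_apply_ne _ (by simp [idxB]; omega) (by simp [idxB]; omega)
  have hvj : ∀ S : Fin n → ℕ × ℕ,
      tauSYT n i S (idxA n j hj1 hj2) = S (idxA n j hj1 hj2) := fun S =>
    tau_apply_ne _ (by simp [idxA]; omega) (by simp [idxA]; omega)
  have hvj' : ∀ S : Fin n → ℕ × ℕ,
      tauSYT n i S (idxB n j hj2) = S (idxB n j hj2) := fun S =>
    tau_apply_ne _ (by simp [idxB]; omega) (by simp [idxB]; omega)
  by_cases hacci : (pos Ai).1 ≠ (pos Bi).1 ∧ (pos Ai).2 ≠ (pos Bi).2 <;>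
    by_cases haccj : (pos Aj).1 ≠ (pos Bj).1 ∧ (pos Aj).2 ≠ (pos Bj).2
  · have e1 := tau_swap h hj1 hj2 haccj
    have e2 := tau_swap h hi1 hi2 hacci
    have hS1 : IsSYT n (tauSYT n j pos) := tau_preserves h j
    have hS2 : IsSYT n (tauSYT n i pos) := tau_preserves h i
    have f1 : tauSYT n i (tauSYT n j pos) =
        (tauSYT n j pos) ∘ (Equiv.swap Ai Bi) := by
      apply tau_swap hS1 hi1 hi2
      rw [hvi, hvi']
      exact hacci
    have f2 : tauSYT n j (tauSYT n i pos) =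
        (tauSYT n i pos) ∘ (Equiv.swap Aj Bj) := by
      apply tau_swap hS2 hj1 hj2
      rw [hvj, hvj']
      exact haccj
    rw [f1, f2, e1, e2]
    funext m
    simp only [Function.comp_apply]
    rw [hσc]
  · rw [tau_fix h hj1 hj2 haccj]
    have hS2 : IsSYT n (tauSYT n i pos) := tau_preserves h i
    refine ((tau_fix hS2 hj1 hj2 ?_)).symm
    rw [hvj, hvj']
    exact haccj
  · rw [tau_fix h hi1 hi2 hacci]
    have hS1 : IsSYT n (tauSYT n j pos) := tau_preserves h j
    refine (tau_fix hS1 hi1 hi2 ?_)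
    rw [hvi, hvi']
    exact hacci
  · rw [tau_fix h hi1 hi2 hacci, tau_fix h hj1 hj2 haccj, tau_fix h hi1 hi2 hacci]

/-! ### Word machinery -/

noncomputable def app (n : ℕ) (w : List ℕ) (S : Fin n → ℕ × ℕ) : Fin n → ℕ × ℕ :=
  w.foldl (fun S i => tauSYT n i S) S

def cword (k : ℕ) : List ℕ := (List.range k).map (· + 1)

def Wword : ℕ → List ℕ
  | 0 => []
  | k + 1 => cword (k + 1) ++ Wword k

lemma app_nil (S : Fin n → ℕ × ℕ) : app n [] S = S := rfl

lemma app_cons (i : ℕ) (w : List ℕ) (S : Fin n → ℕ × ℕ) :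
    app n (i :: w) S = app n w (tauSYT n i S) := rfl

lemma app_append (u v : List ℕ) (S : Fin n → ℕ × ℕ) :
    app n (u ++ v) S = app n v (app n u S) := List.foldl_append ..

lemma app_syt (w : List ℕ) (h : IsSYT n S) : IsSYT n (app n w S) := by
  induction w generalizing S with
  | nil => exact h
  | cons x w ih => exact ih (tau_preserves h x)

/-- `app`-equivalence of words on SYTs. -/
def Aeq (n : ℕ) (w w' : List ℕ) : Prop :=
  ∀ S : Fin n → ℕ × ℕ, IsSYT n S → app n w S = app n w' S

lemma Aeq.refl (w : List ℕ) : Aeq n w w := fun _ _ => rfl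

lemma Aeq.trans (h1 : Aeq n w w') (h2 : Aeq n w' w'') : Aeq n w w'' :=
  fun S hS => (h1 S hS).trans (h2 S hS)

lemma Aeq.symm (h1 : Aeq n w w') : Aeq n w' w := fun S hS => (h1 S hS).symm

lemma Aeq.congr (h : Aeq n u u') (v x : List ℕ) :
    Aeq n (v ++ (u ++ x)) (v ++ (u' ++ x)) := by
  intro S hS
  rw [app_append, app_append, app_append, app_append, h _ (app_syt v hS)]

lemma Aeq.congr_left (h : Aeq n u u') (x : List ℕ) : Aeq n (u ++ x) (u' ++ x) := by
  intro S hS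
  rw [app_append, app_append, h _ hS]

lemma Aeq.congr_right (h : Aeq n u u') (v : List ℕ) : Aeq n (v ++ u) (v ++ u') := by
  intro S hS
  rw [app_append, app_append, h _ (app_syt v hS)]

/-- Palindrome cancellation. -/
lemma pal (w : List ℕ) : Aeq n (w ++ w.reverse) [] := by
  induction w with
  | nil => exact Aeq.refl []
  | cons x w ih =>
    intro S hS
    have h1 : x :: w ++ (w.reverse ++ [x]) = [x] ++ ((w ++ w.reverse) ++ [x]) := by
      simp
    rw [List.reverse_cons, h1, app_append, app_append,
      ih _ (app_syt [x] hS), app_nil]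
    show tauSYT n x (tauSYT n x S) = S
    exact tau_tau hS x

lemma pal' (w : List ℕ) : Aeq n (w.reverse ++ w) [] := by
  have := pal (n := n) w.reverse
  rwa [List.reverse_reverse] at this

/-- A single big letter commutes past a word of small letters. -/
lemma commL (w : List ℕ) (j : ℕ) (hw : ∀ x ∈ w, x + 2 ≤ j) :
    Aeq n (w ++ [j]) (j :: w) := by
  induction w with
  | nil => exact Aeq.refl [j]
  | cons x w ih =>
    intro S hS
    have hx : x + 2 ≤ j := hw x (by simp)
    have ihw : ∀ y ∈ w, y + 2 ≤ j := fun y hy => hw y (by simp [hy])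
    rw [List.cons_append, app_cons, ih ihw _ (tau_preserves hS x)]
    show app n w (tauSYT n j (tauSYT n x S)) = app n w (tauSYT n x (tauSYT n j S))
    rw [tau_comm hS hx]

lemma cword_succ (k : ℕ) : cword (k + 1) = cword k ++ [k + 1] := by
  simp [cword, List.range_succ]

lemma cword_rev_succ (k : ℕ) : (cword (k + 1)).reverse = (k + 1) :: (cword k).reverse := by
  rw [cword_succ]; simp

lemma cword_letters {k x : ℕ} (hx : x ∈ cword k) : 1 ≤ x ∧ x ≤ k := by
  simp only [cword, List.mem_map, List.mem_range] at hx
  obtain ⟨m, hm, rfl⟩ := hx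
  omega

lemma Wword_letters : ∀ {k x : ℕ}, x ∈ Wword k → 1 ≤ x ∧ x ≤ k
  | 0, x, hx => by simp [Wword] at hx
  | k + 1, x, hx => by
    rw [Wword, List.mem_append] at hx
    rcases hx with hx | hx
    · exact cword_letters hx
    · have := Wword_letters hx
      omega

/-- A big generator commutes past a word of small letters, semantically. -/
lemma tau_commW {w : List ℕ} {j : ℕ} (hw : ∀ x ∈ w, x + 2 ≤ j)
    (hS : IsSYT n S) : tauSYT n j (app n w S) = app n w (tauSYT n j S) := by
  induction w generalizing S with
  | nil => rfl
  | cons x w ih =>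
    rw [app_cons, app_cons, ih (fun y hy => hw y (by simp [hy])) (tau_preserves hS x),
      tau_comm hS (hw x (by simp))]

lemma palC {w : List ℕ} (hS : IsSYT n S) : app n w.reverse (app n w S) = S := by
  have := pal (n := n) w S hS
  rwa [app_append] at this

lemma appW_succ (m : ℕ) (X : Fin n → ℕ × ℕ) :
    app n (Wword (m + 1)) X = app n (Wword m) (app n (cword (m + 1)) X) := by
  rw [Wword, app_append]

lemma appC_succ (j : ℕ) (X : Fin n → ℕ × ℕ) :
    app n (cword (j + 1)) X = tauSYT n (j + 1) (app n (cword j) X) := by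
  rw [cword_succ, app_append]; rfl

/-- The main word identities, proved by strong induction:
`B k : W_k c_{k+1} W_k = reverse (c_{k+1})` and `A k : W_k W_k = 1` on SYTs. -/
lemma lemBA : ∀ k : ℕ, (∀ S : Fin n → ℕ × ℕ, IsSYT n S →
      app n (Wword k) (app n (cword (k + 1)) (app n (Wword k) S)) =
        app n (cword (k + 1)).reverse S) ∧
    (∀ S : Fin n → ℕ × ℕ, IsSYT n S → app n (Wword k) (app n (Wword k) S) = S) := by
  intro k
  induction k using Nat.strong_induction_on with
  | _ k ih =>
  have Apart : ∀ m, m ≤ k →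
      (∀ S : Fin n → ℕ × ℕ, IsSYT n S → app n (Wword m) (app n (Wword m) S) = S) := by
    intro m hm
    match m with
    | 0 => intro S _; rfl
    | m + 1 =>
      intro S hS
      have hB := (ih m (by omega)).1
      rw [appW_succ, appW_succ, hB _ (app_syt _ hS)]
      exact palC hS
  have push : ∀ m, m < k → ∀ S : Fin n → ℕ × ℕ, IsSYT n S →
      app n (cword (m + 1)) (app n (Wword m) S) =
        app n (Wword m) (app n (cword (m + 1)).reverse S) := by
    intro m hm S hS
    have hB := (ih m hm).1 S hS
    have hA := Apart m (by omega) _ (app_syt (cword (m+1)) (app_syt (Wword m) hS))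
    rw [hB] at hA
    exact hA.symm
  refine ⟨?_, ?_⟩
  swap
  · match k with
    | 0 => intro S _; rfl
    | m + 1 =>
      intro S hS
      have hB := (ih m (by omega)).1
      rw [appW_succ, appW_succ, hB _ (app_syt _ hS)]
      exact palC hS
  match k with
  | 0 =>
    intro S _
    rfl
  | 1 =>
    intro S hS
    show tauSYT n 1 (tauSYT n 2 (tauSYT n 1 (tauSYT n 1 S))) =
      app n (cword 2).reverse S
    rw [tau_tau hS 1]
    rfl
  | (m + 2) =>
    intro S hS
    have hc : ∀ x ∈ cword (m + 1), x + 2 ≤ m + 3 := fun x hx => by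
      have := cword_letters hx; omega
    have hw2 : ∀ x ∈ Wword m, x + 2 ≤ m + 2 := fun x hx => by
      have := Wword_letters hx; omega
    have hw3 : ∀ x ∈ Wword m, x + 2 ≤ m + 3 := fun x hx => by
      have := Wword_letters hx; omega
    have hT0s : IsSYT n (app n (cword (m + 2)) S) := app_syt _ hS
    have step2 : app n (cword (m + 2)) (app n (Wword (m + 1)) (app n (cword (m + 2)) S)) =
        app n (Wword (m + 1)) S := by
      rw [push (m + 1) (by omega) _ hT0s, palC hS]
    have step3 : app n (cword (m + 1)) (app n (Wword (m + 1)) S) = app n (Wword m) S := by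
      rw [appW_succ m S, push m (by omega) _ (app_syt _ hS), palC hS]
    have step5 : ∀ Y : Fin n → ℕ × ℕ, IsSYT n Y →
        app n (Wword (m + 1)) (app n (Wword m) Y) = app n (cword (m + 1)).reverse Y := by
      intro Y hY
      rw [appW_succ m, push m (by omega) _ hY]
      exact Apart m (by omega) _ (app_syt _ hY)
    rw [appW_succ (m + 1), appW_succ (m + 1) S]
    rw [appC_succ (m + 2), appC_succ (m + 1)]
    rw [step2]
    rw [← tau_commW hc (app_syt (Wword (m + 1)) hS)]
    rw [step3]
    rw [tau_commW hw3 hS]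
    rw [tau_commW hw2 (tau_preserves hS (m + 3))]
    rw [step5 _ (tau_preserves (tau_preserves hS (m + 3)) (m + 2))]
    rw [cword_rev_succ (m + 2), cword_rev_succ (m + 1), app_cons, app_cons]

lemma involW (k : ℕ) (hS : IsSYT n S) :
    app n (Wword k) (app n (Wword k) S) = S := (lemBA k).2 S hS

/-! ### Geometry of consecutive entries -/

/-- Consecutive entries in the same column are vertically adjacent. -/
lemma colAdj (h : IsSYT n pos) {j j' : Fin n} (hjj : j.val + 1 = j'.val)
    {r r' c : ℕ} (hj : pos j = (r, c)) (hj' : pos j' = (r', c)) : r' = r + 1 := by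
  have hlt : j < j' := by simp only [Fin.lt_def]; omega
  have hrr : r < r' := by
    rcases lt_or_ge r r' with h1 | h1
    · exact h1
    · exact absurd (nw_le h hj hj' h1 (le_refl c)) (by simp only [Fin.lt_def] at hlt ⊢; omega)
  by_contra hne
  have hr2 : r + 1 < r' := by omega
  obtain ⟨j'', hlt'', hj''⟩ := (h.2 j' (r' - 1) c).1 (by rw [hj']; congr 1; omega)
  have h1 : j < j'' := nw_lt h hj'' hj (by omega) (le_refl c)
      (by intro hc; have := congrArg Prod.fst hc; simp only [] at this; omega)
  simp only [Fin.lt_def] at h1 hlt''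
  omega

/-- Consecutive entries in the same row are horizontally adjacent. -/
lemma rowAdj (h : IsSYT n pos) {j j' : Fin n} (hjj : j.val + 1 = j'.val)
    {r c c' : ℕ} (hj : pos j = (r, c)) (hj' : pos j' = (r, c')) : c' = c + 1 := by
  have ht := transpose h
  exact colAdj ht hjj (r := c) (r' := c') (c := r)
    (by show ((pos j).2, (pos j).1) = (c, r); rw [hj])
    (by show ((pos j').2, (pos j').1) = (c', r); rw [hj'])

/-- Impossible: three consecutive entries with the first two in a row,
the last two in a column. -/
lemma imp1 (h : IsSYT n pos) {j0 j1 j2 : Fin n} (h01 : j0.val + 1 = j1.val)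
    (h12 : j1.val + 1 = j2.val) {r c0 c1 r2 : ℕ}
    (p0 : pos j0 = (r, c0)) (p1 : pos j1 = (r, c1)) (p2 : pos j2 = (r2, c1)) : False := by
  have hne01 : j0 ≠ j1 := by simp only [ne_eq, Fin.ext_iff]; omega
  have hne12 : j1 ≠ j2 := by simp only [ne_eq, Fin.ext_iff]; omega
  have hc01 : c0 < c1 := by
    rcases lt_or_ge c0 c1 with h1 | h1
    · exact h1
    · have := nw_le h p0 p1 (le_refl r) h1
      have hlt : j0 < j1 := by simp only [Fin.lt_def]; omega
      rcases lt_or_eq_of_le h1 with h2 | h2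
      · exact absurd this (by simp only [Fin.lt_def] at hlt ⊢; omega)
      · subst h2
        exact absurd (h.1 (p0.trans p1.symm)) hne01
  have hr12 : r < r2 := by
    rcases lt_or_ge r r2 with h1 | h1
    · exact h1
    · have := nw_le h p1 p2 h1 (le_refl c1)
      have hlt : j1 < j2 := by simp only [Fin.lt_def]; omega
      rcases lt_or_eq_of_le h1 with h2 | h2
      · exact absurd this (by simp only [Fin.lt_def] at hlt ⊢; omega)
      · subst h2
        exact absurd (h.1 (p1.trans p2.symm)) hne12
  -- the box directly left of j2
  obtain ⟨jw, hwlt, hjw⟩ := (h.2 j2 r2 (c1 - 1)).2 (by rw [p2]; congr 1; omega)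
  have h1 : j0 < jw := nw_lt h hjw p0 (by omega) (by omega)
    (by intro hc; have := congrArg Prod.fst hc; simp at this; omega)
  have : jw = j1 := by
    simp only [Fin.lt_def] at h1 hwlt
    simp only [Fin.ext_iff]
    omega
  subst this
  rw [p1] at hjw
  have := congrArg Prod.fst hjw
  simp at this
  omega

/-- Impossible: three consecutive entries with the first two in a column,
the last two in a row. -/
lemma imp2 (h : IsSYT n pos) {j0 j1 j2 : Fin n} (h01 : j0.val + 1 = j1.val)
    (h12 : j1.val + 1 = j2.val) {c r0 r1 c2 : ℕ}
    (p0 : pos j0 = (r0, c)) (p1 : pos j1 = (r1, c)) (p2 : pos j2 = (r1, c2)) : False :=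
  imp1 (transpose h) h01 h12 (r := c) (c0 := r0) (c1 := r1) (r2 := c2)
    (by show ((pos j0).2, (pos j0).1) = (c, r0); rw [p0])
    (by show ((pos j1).2, (pos j1).1) = (c, r1); rw [p1])
    (by show ((pos j2).2, (pos j2).1) = (c2, r1); rw [p2])

/-- Strictly-NW comparison for non-consecutive use: (already nw_lt). -/
lemma row_lt_of_col (h : IsSYT n pos) {j j' : Fin n} (hlt : j < j')
    {r r' c : ℕ} (hj : pos j = (r, c)) (hj' : pos j' = (r', c)) : r < r' := by
  rcases lt_or_ge r r' with h1 | h1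
  · exact h1
  · have := nw_le h hj hj' h1 (le_refl c)
    rcases lt_or_eq_of_le h1 with h2 | h2
    · exact absurd this (by simp only [Fin.lt_def] at hlt ⊢; omega)
    · subst h2
      have := h.1 (hj.trans hj'.symm)
      subst this
      exact absurd hlt (lt_irrefl _)

/-! ### Bookkeeping for partial promotions -/

lemma app_hi {w : List ℕ} {j : Fin n} (hw : ∀ x ∈ w, j.val + 2 ≤ x)
    (S : Fin n → ℕ × ℕ) : app n w S j = S j := by
  induction w generalizing S with
  | nil => rfl
  | cons x w ih =>
    rw [app_cons, ih (fun y hy => hw y (by simp [hy]))]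
    have hx := hw x (by simp)
    exact tau_apply_ne j (by omega) (by omega)

lemma app_lo {w : List ℕ} {j : Fin n} (hw : ∀ x ∈ w, x < j.val)
    (S : Fin n → ℕ × ℕ) : app n w S j = S j := by
  induction w generalizing S with
  | nil => rfl
  | cons x w ih =>
    rw [app_cons, ih (fun y hy => hw y (by simp [hy]))]
    have hx := hw x (by simp)
    exact tau_apply_ne j (by omega) (by omega)

lemma cword_split {m k : ℕ} (hmk : m ≤ k) :
    ∃ w, cword k = cword m ++ w ∧ ∀ x ∈ w, m + 1 ≤ x := by
  induction k with
  | zero =>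
    exact ⟨[], by simp [show m = 0 by omega], by simp⟩
  | succ k ih =>
    rcases Nat.eq_or_lt_of_le hmk with he | hlt
    · exact ⟨[], by simp [he], by simp⟩
    · obtain ⟨w, hw1, hw2⟩ := ih (by omega)
      refine ⟨w ++ [k + 1], by rw [cword_succ, hw1, List.append_assoc], ?_⟩
      intro x hx
      rw [List.mem_append] at hx
      rcases hx with hx | hx
      · exact hw2 x hx
      · simp at hx; omega

lemma mem_Dsi {x : ℕ} {pos : Fin n → ℕ × ℕ} (h1 : 1 ≤ x) (h2 : x < n) :
    x ∈ Dsi n pos ↔ (pos ⟨x - 1, by omega⟩).1 < (pos ⟨x, h2⟩).1 := by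
  constructor
  · rintro ⟨_, h2', hlt⟩
    exact hlt
  · intro hlt
    exact ⟨h1, h2, hlt⟩

/-- The key promotion/descent-shift lemma:
`i ∈ D(δ_k T) ↔ i+1 ∈ D(T)` for `1 ≤ i ≤ k-1`. -/
lemma descent_shift (hS : IsSYT n S) {p k : ℕ} (hk : p + 2 ≤ k) (hkn : k < n) :
    ((p + 1) ∈ Dsi n (app n (cword k) S)) ↔ ((p + 2) ∈ Dsi n S) := by
  have hp2n : p + 2 < n := by omega
  have hp1n : p + 1 < n := by omega
  have hpn : p < n := by omega
  set j0 : Fin n := ⟨p, hpn⟩ with hj0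
  set j1 : Fin n := ⟨p + 1, hp1n⟩ with hj1
  set j2 : Fin n := ⟨p + 2, hp2n⟩ with hj2
  rw [mem_Dsi (by omega) hp1n, mem_Dsi (by omega) hp2n]
  -- identify the relevant entries of the final tableau with stage p+1 / p+2 values
  set S0 := app n (cword p) S with hS0d
  have hS0 : IsSYT n S0 := app_syt _ hS
  have hS1d : app n (cword (p + 1)) S = tauSYT n (p + 1) S0 := appC_succ p S
  set S1 := tauSYT n (p + 1) S0 with hS1def
  have hS1 : IsSYT n S1 := tau_preserves hS0 _
  have hS2d : app n (cword (p + 2)) S = tauSYT n (p + 2) S1 := by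
    rw [appC_succ (p + 1) S, hS1d]
  set S2 := tauSYT n (p + 2) S1 with hS2def
  have e0 : app n (cword k) S j0 = S1 j0 := by
    obtain ⟨w, hw1, hw2⟩ := cword_split (show p + 1 ≤ k by omega)
    rw [hw1, app_append, app_hi (fun x hx => by have := hw2 x hx; simp [hj0]; omega), hS1d]
  have e1 : app n (cword k) S j1 = S2 j1 := by
    obtain ⟨w, hw1, hw2⟩ := cword_split (show p + 2 ≤ k by omega)
    rw [hw1, app_append, app_hi (fun x hx => by have := hw2 x hx; simp [hj1]; omega), hS2d]
  have hb : S0 j1 = S j1 :=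
    app_lo (fun x hx => by have := cword_letters hx; simp [hj1]; omega) S
  have hc : S0 j2 = S j2 :=
    app_lo (fun x hx => by have := cword_letters hx; simp [hj2]; omega) S
  have hgoal0 : (app n (cword k) S ⟨p + 1 - 1, by omega⟩ : ℕ × ℕ) = S1 j0 := by
    convert e0 using 3
    omega
  have hgoal2 : (S ⟨p + 2 - 1, by omega⟩ : ℕ × ℕ) = S j1 := by
    convert rfl using 3
    omega
  rw [hgoal0, hgoal2, e1, ← hb, ← hc]
  -- now: (S1 j0).1 < (S2 j1).1 ↔ (S0 j1).1 < (S0 j2).1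
  have hA1 : idxA n (p + 1) (by omega) hp1n = j0 := by simp [idxA, hj0]
  have hB1 : idxB n (p + 1) hp1n = j1 := by simp [idxB, hj1]
  have hA2 : idxA n (p + 2) (by omega) hp2n = j1 := by simp [idxA, hj1]
  have hB2 : idxB n (p + 2) hp2n = j2 := by simp [idxB, hj2]
  have hne01 : j0 ≠ j1 := by simp [hj0, hj1, Fin.ext_iff]
  have hne02 : j0 ≠ j2 := by simp [hj0, hj2, Fin.ext_iff]
  have hne12 : j1 ≠ j2 := by simp [hj1, hj2, Fin.ext_iff]
  by_cases hacc1 : (S0 j0).1 ≠ (S0 j1).1 ∧ (S0 j0).2 ≠ (S0 j1).2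
  · have hswap1 : S1 = S0 ∘ Equiv.swap j0 j1 := by
      rw [hS1def, tau_swap hS0 (by omega) hp1n (by rw [hA1, hB1]; exact hacc1), hA1, hB1]
    have v10 : S1 j0 = S0 j1 := by rw [hswap1]; simp
    have v11 : S1 j1 = S0 j0 := by rw [hswap1]; simp
    have v12 : S1 j2 = S0 j2 := by
      rw [hswap1]
      simp only [Function.comp_apply]
      rw [Equiv.swap_apply_of_ne_of_ne (Ne.symm hne02) (Ne.symm hne12)]
    by_cases hacc2 : (S1 j1).1 ≠ (S1 j2).1 ∧ (S1 j1).2 ≠ (S1 j2).2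
    · have hswap2 : S2 = S1 ∘ Equiv.swap j1 j2 := by
        rw [hS2def, tau_swap hS1 (by omega) hp2n (by rw [hA2, hB2]; exact hacc2), hA2, hB2]
      have v21 : S2 j1 = S1 j2 := by rw [hswap2]; simp
      rw [v21, v12, v10]
    · have hfix2 : S2 = S1 := by
        rw [hS2def, tau_fix hS1 (by omega) hp2n (by rw [hA2, hB2]; exact hacc2)]
      rw [hfix2, v11, v10]
      -- goal : (S0 j1).1 < (S0 j0).1 ↔ (S0 j1).1 < (S0 j2).1
      push_neg at hacc2
      rw [v11, v12] at hacc2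
      rcases Classical.em ((S0 j0).1 = (S0 j2).1) with hr | hr
      · rw [hr]
      · have hcol : (S0 j0).2 = (S0 j2).2 := hacc2 (by exact hr)
        -- consecutive entries j1→j2 in S1 share a column: adjacency
        have hadj : (S0 j2).1 = (S0 j0).1 + 1 := by
          apply colAdj hS1 (show j1.val + 1 = j2.val by simp [hj1, hj2])
            (r := (S0 j0).1) (c := (S0 j0).2)
          · rw [v11]
          · rw [v12, hcol]
        have := hacc1.1
        omega
  · have hfix1 : S1 = S0 := by
      rw [hS1def, tau_fix hS0 (by omega) hp1n (by rw [hA1, hB1]; exact hacc1)]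
    rw [hfix1]
    push_neg at hacc1
    by_cases hacc2 : (S0 j1).1 ≠ (S0 j2).1 ∧ (S0 j1).2 ≠ (S0 j2).2
    · have hswap2 : S2 = S0 ∘ Equiv.swap j1 j2 := by
        rw [hS2def, hfix1, tau_swap hS0 (by omega) hp2n (by rw [hA2, hB2]; exact hacc2),
          hA2, hB2]
      have v21 : S2 j1 = S0 j2 := by rw [hswap2]; simp
      rw [v21]
      -- goal : (S0 j0).1 < (S0 j2).1 ↔ (S0 j1).1 < (S0 j2).1
      rcases Classical.em ((S0 j0).1 = (S0 j1).1) with hr | hr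
      · rw [hr]
      · have hcol : (S0 j0).2 = (S0 j1).2 := hacc1 hr
        have hadj : (S0 j1).1 = (S0 j0).1 + 1 := by
          apply colAdj hS0 (show j0.val + 1 = j1.val by simp [hj0, hj1])
            (r := (S0 j0).1) (c := (S0 j0).2)
          · exact Prod.mk.eta.symm
          · rw [hcol]
        have h21 := hacc2.1
        omega
    · have hfix2 : S2 = S0 := by
        rw [hS2def, hfix1, tau_fix hS0 (by omega) hp2n (by rw [hA2, hB2]; exact hacc2)]
      rw [hfix2]
      push_neg at hacc2
      -- goal : (S0 j0).1 < (S0 j1).1 ↔ (S0 j1).1 < (S0 j2).1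
      rcases Classical.em ((S0 j0).1 = (S0 j1).1) with hr1 | hr1
      · rcases Classical.em ((S0 j1).1 = (S0 j2).1) with hr2 | hr2
        · omega
        · -- a,b same row; b,c same column: impossible
          have hcol : (S0 j1).2 = (S0 j2).2 := hacc2 hr2
          exact absurd (imp1 hS0 (show j0.val + 1 = j1.val by simp [hj0, hj1])
            (show j1.val + 1 = j2.val by simp [hj1, hj2])
            (r := (S0 j0).1) (c0 := (S0 j0).2) (c1 := (S0 j1).2) (r2 := (S0 j2).1)
            Prod.mk.eta.symm (by rw [hr1]) (by rw [hcol]))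
            (fun hh => hh)
      · have hcol1 : (S0 j0).2 = (S0 j1).2 := hacc1 hr1
        have hadj1 : (S0 j1).1 = (S0 j0).1 + 1 := by
          apply colAdj hS0 (show j0.val + 1 = j1.val by simp [hj0, hj1])
            (r := (S0 j0).1) (c := (S0 j0).2)
          · exact Prod.mk.eta.symm
          · rw [hcol1]
        rcases Classical.em ((S0 j1).1 = (S0 j2).1) with hr2 | hr2
        · -- a,b same column; b,c same row: impossible
          have hcol2 : (S0 j1).2 ≠ (S0 j2).2 := by
            intro hc2
            have := hS0.1 (show S0 j1 = S0 j2 from Prod.ext hr2 hc2)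
            exact hne12 this
          exact absurd (imp2 hS0 (show j0.val + 1 = j1.val by simp [hj0, hj1])
            (show j1.val + 1 = j2.val by simp [hj1, hj2])
            (c := (S0 j0).2) (r0 := (S0 j0).1) (r1 := (S0 j1).1) (c2 := (S0 j2).2)
            Prod.mk.eta.symm (by rw [hcol1]) (by rw [hr2]))
            (fun hh => hh)
        · have hcol2 : (S0 j1).2 = (S0 j2).2 := hacc2 hr2
          have hadj2 : (S0 j2).1 = (S0 j1).1 + 1 := by
            apply colAdj hS0 (show j1.val + 1 = j2.val by simp [hj1, hj2])
              (r := (S0 j1).1) (c := (S0 j1).2)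
            · exact Prod.mk.eta.symm
            · rw [hcol2]
          omega

/-! ### Final assembly -/

/-- τ₁ fixes every SYT (entries 1,2 are always adjacent). -/
lemma tau1_fix (hS : IsSYT n S) : tauSYT n 1 S = S := by
  by_cases h2 : 1 < n
  swap
  · exact tau_out (by omega)
  refine tau_fix hS (by omega) h2 ?_
  rintro ⟨hr, hc⟩
  have hF0 : (0 : ℕ) < n := by omega
  have hr' : (S ⟨0, hF0⟩).1 ≠ (S ⟨1, h2⟩).1 := hr
  have hc' : (S ⟨0, hF0⟩).2 ≠ (S ⟨1, h2⟩).2 := hc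
  rcases h01 : S ⟨1, h2⟩ with ⟨r, c⟩
  rw [h01] at hr' hc'
  rcases r with _ | r'
  · rcases c with _ | c'
    · rcases h00 : S ⟨0, hF0⟩ with ⟨a, b⟩
      rcases a with _ | a'
      · rcases b with _ | b'
        · refine absurd (hS.1 (h00.trans h01.symm)) ?_
          intro hh
          have := congrArg Fin.val hh
          simp at this
        · obtain ⟨j', hj', _⟩ := (hS.2 ⟨0, hF0⟩ 0 b').2 h00
          have hv : j'.val < 0 := hj'
          omega
      · obtain ⟨j', hj', _⟩ := (hS.2 ⟨0, hF0⟩ a' b).1 h00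
        have hv : j'.val < 0 := hj'
        omega
    · obtain ⟨j', hj', hjv⟩ := (hS.2 ⟨1, h2⟩ 0 c').2 h01
      have hv : j'.val < 1 := hj'
      have hj0 : j' = ⟨0, hF0⟩ := Fin.ext (show j'.val = 0 by omega)
      subst hj0
      exact hr' (by rw [hjv])
  · obtain ⟨j', hj', hjv⟩ := (hS.2 ⟨1, h2⟩ r' c).1 h01
    have hv : j'.val < 1 := hj'
    have hj0 : j' = ⟨0, hF0⟩ := Fin.ext (show j'.val = 0 by omega)
    subst hj0
    exact hc' (by rw [hjv])

lemma inner_eq (K : ℕ) (S : Fin n → ℕ × ℕ) :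
    (List.range K).foldl (fun S' m => tauSYT n (m + 1) S') S = app n (cword K) S := by
  rw [app, cword, List.foldl_map]

lemma outer_eq (M : ℕ) : ∀ S : Fin n → ℕ × ℕ,
    (List.range M).foldl (fun S j => app n (cword (M - j)) S) S = app n (Wword M) S := by
  induction M with
  | zero => intro S; rfl
  | succ M ih =>
    intro S
    rw [List.range_succ_eq_map]
    rw [List.foldl_cons, List.foldl_map]
    have hfe : (fun (S : Fin n → ℕ × ℕ) (j : ℕ) => app n (cword (M + 1 - (j + 1))) S) =
        (fun S j => app n (cword (M - j)) S) := by
      funext S j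
      have : M + 1 - (j + 1) = M - j := by omega
      rw [this]
    rw [hfe, ih, Nat.sub_zero]
    exact (appW_succ M S).symm

/-- The main induction: descents of `F_k T` are the reversed descents of `T`. -/
lemma main (k : ℕ) (hkn : k < n) : ∀ S : Fin n → ℕ × ℕ, IsSYT n S →
    ∀ i, 1 ≤ i → i ≤ k → (i ∈ Dsi n S ↔ (k + 1 - i) ∈ Dsi n (app n (Wword k) S)) := by
  induction k with
  | zero => intro S hS i h1 h0; omega
  | succ k ih =>
  match k, ih with
  | 0, _ =>
    intro S hS i h1 h0
    have hi : i = 1 := by omega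
    subst hi
    show 1 ∈ Dsi n S ↔ 1 ∈ Dsi n (app n (Wword 1) S)
    have : app n (Wword 1) S = S := by
      show tauSYT n 1 S = S
      exact tau1_fix hS
    rw [this]
  | m + 1, ih =>
    have ih' := ih (by omega)
    set k := m + 1 with hk
    -- part for i ≥ 2, any SYT
    have h2part : ∀ S : Fin n → ℕ × ℕ, IsSYT n S → ∀ i, 2 ≤ i → i ≤ k + 1 →
        (i ∈ Dsi n S ↔ (k + 2 - i) ∈ Dsi n (app n (Wword (k + 1)) S)) := by
      intro S hS i hi2 hik
      obtain ⟨p, rfl⟩ : ∃ p, i = p + 2 := ⟨i - 2, by omega⟩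
      have hshift := (descent_shift hS (p := p) (k := k + 1) (by omega) hkn).symm
      rw [hshift]
      have hih := ih' (app n (cword (k + 1)) S) (app_syt _ hS) (p + 1) (by omega) (by omega)
      rw [hih, ← app_append, ← Wword]
      have : k + 1 - (p + 1) = k + 2 - (p + 2) := by omega
      rw [this]
  -- i = 1 via the involution
    intro S hS i h1 hik
    rcases Nat.lt_or_ge i 2 with hi1 | hi2
    swap
    · exact h2part S hS i hi2 hik
    have hi : i = 1 := by omega
    subst hi
    have hES : IsSYT n (app n (Wword (k + 1)) S) := app_syt _ hS
    have := h2part (app n (Wword (k + 1)) S) hES (k + 1) (by omega) (le_refl _)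
    rw [involW (k + 1) hS] at this
    have he : k + 2 - (k + 1) = 1 := by omega
    rw [he] at this
    have he2 : k + 1 + 1 - 1 = k + 1 := by omega
    rw [he2]
    exact this.symm

lemma evac_eq (pos : Fin n → ℕ × ℕ) : evacSYT n pos = app n (Wword (n - 1)) pos := by
  rw [evacSYT]
  have hfe : (fun (S : Fin n → ℕ × ℕ) (j : ℕ) =>
      (List.range (n - 1 - j)).foldl (fun S' m => tauSYT n (m + 1) S') S) =
      (fun S j => app n (cword (n - 1 - j)) S) := by
    funext S j
    exact inner_eq _ S
  rw [hfe]
  exact outer_eq (n - 1) pos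

end SytAux

open SytAux in
/-- For every standard Young tableau `T` of size `n`,
`Dsi(T) = {n - i : i ∈ Dsi(ev T)}` and `Asi(T) = {n - i : i ∈ Asi(ev T)}`. -/
theorem stmt2 (n : ℕ) (pos : Fin n → ℕ × ℕ) (hpos : IsSYT n pos) :
    Dsi n pos = (fun i => n - i) '' Dsi n (evacSYT n pos) ∧
    Asi n pos = (fun i => n - i) '' Asi n (evacSYT n pos) := by
  have hDb : ∀ (q : Fin n → ℕ × ℕ) (x : ℕ), x ∈ Dsi n q → 1 ≤ x ∧ x < n := by
    rintro q x ⟨h1, h2, _⟩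
    exact ⟨h1, h2⟩
  rcases Nat.eq_zero_or_pos n with hn | hn
  · subst hn
    constructor
    · ext x
      constructor
      · intro hx; have := (hDb _ x hx).2; omega
      · rintro ⟨i, hi, rfl⟩; have := (hDb _ i hi).2; omega
    · ext x
      constructor
      · rintro ⟨h1, h2, _⟩; omega
      · rintro ⟨i, ⟨h1, h2, _⟩, rfl⟩; omega
  have hev : evacSYT n pos = app n (Wword (n - 1)) pos := evac_eq pos
  have key : ∀ i, 1 ≤ i → i ≤ n - 1 →
      (i ∈ Dsi n pos ↔ (n - i) ∈ Dsi n (evacSYT n pos)) := by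
    intro i h1 h2
    have := main (n - 1) (by omega) pos hpos i h1 h2
    rw [show n - 1 + 1 - i = n - i by omega, ← hev] at this
    exact this
  have hD : Dsi n pos = (fun i => n - i) '' Dsi n (evacSYT n pos) := by
    ext x
    constructor
    · intro hx
      obtain ⟨h1, h2⟩ := hDb _ x hx
      have hx' := (key x h1 (by omega)).1 hx
      exact ⟨n - x, hx', by show n - (n - x) = x; omega⟩
    · rintro ⟨i, hi, rfl⟩
      obtain ⟨h1, h2⟩ := hDb _ i hi
      have hkey := key (n - i) (by omega) (by omega)
      rw [show n - (n - i) = i by omega] at hkey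
      exact hkey.2 hi
  refine ⟨hD, ?_⟩
  ext x
  simp only [Asi, Set.mem_setOf_eq, Set.mem_image]
  constructor
  · rintro ⟨h1, h2, hnd⟩
    refine ⟨n - x, ⟨by omega, by omega, ?_⟩, by show n - (n - x) = x; omega⟩
    intro hd
    apply hnd
    rw [hD]
    exact ⟨n - x, hd, by show n - (n - x) = x; omega⟩
  · rintro ⟨i, ⟨h1, h2, hnd⟩, rfl⟩
    refine ⟨by omega, by omega, ?_⟩
    intro hd
    rw [hD] at hd
    obtain ⟨i', hi', he⟩ := hd
    obtain ⟨h1', h2'⟩ := hDb _ i' hi'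
    have he' : n - i' = n - i := he
    have : i' = i := by omega
    exact hnd (this ▸ hi')
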